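/- Let T be an uncle tree of a finite connected simple graph G, rooted at r. Then for every vertex v of G, the path of T from r to v is an induced path of G; that is, two vertices on this path are adjacent in G if and only if they are consecutive on the path. -/
import Mathlib


variable {V : Type}

/-- `u` is an ancestor of `v` (possibly `u = v`) in the rooted tree given by
the parent function `parent`. -/
def Anc (parent : V → V) (u v : V) : Prop := ∃ k : ℕ, parent^[k] v = u

/-- `u` is an elder sibling of `v`: both are non-root vertices with the same
parent, and `u` precedes `v` in the linear order (given by `rank`) on the
children of their common parent. -/
def Elder (parent : V → V) (rank : V → ℕ) (r u v : V) : Prop :=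
  u ≠ r ∧ v ≠ r ∧ u ≠ v ∧ parent u = parent v ∧ rank u < rank v

/-- An uncle tree of `G` rooted at `r`: a spanning tree of `G` (encoded by a
parent function `parent` fixing the root `r`, with each tree edge `{v, parent v}`
an edge of `G`, and a `depth` function witnessing well-foundedness), together
with a linear order on the children of each vertex (encoded by `rank`, which is
injective on each set of siblings), such that for every edge `uv` of `G` that is
not an edge of the tree, one of `u, v` has an elder sibling that is an ancestor
of the other. -/
structure UncleTree (G : SimpleGraph V) (r : V) where
  parent : V → V
  rank : V → ℕ
  depth : V → ℕ
  parent_root : parent r = r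
  adj_parent : ∀ v, v ≠ r → G.Adj v (parent v)
  depth_root : depth r = 0
  depth_parent : ∀ v, v ≠ r → depth v = depth (parent v) + 1
  rank_injOn : ∀ u v, u ≠ r → v ≠ r → parent u = parent v → rank u = rank v → u = v
  uncle : ∀ u v, G.Adj u v → parent u = v ∨ parent v = u ∨
      (∃ w, Elder parent rank r w u ∧ Anc parent w v) ∨
      (∃ w, Elder parent rank r w v ∧ Anc parent w u)

private lemma depth_iter {G : SimpleGraph V} {r : V} (T : UncleTree G r) :
    ∀ (i : ℕ) (a : V), T.parent^[i] a ≠ r → T.depth (T.parent^[i] a) + i = T.depth a := by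
  intro i
  induction i with
  | zero => intro a _; simp
  | succ i ih =>
    intro a h
    rw [Function.iterate_succ_apply'] at h ⊢
    have hx : T.parent^[i] a ≠ r := by
      intro hx; rw [hx, T.parent_root] at h; exact h rfl
    have h1 := T.depth_parent _ hx
    have h2 := ih a hx
    omega

private lemma key {G : SimpleGraph V} {r : V} (T : UncleTree G r) {a b v : V}
    (hadj : G.Adj a b) (k m : ℕ) (hk : T.parent^[k] v = a) (hm : T.parent^[m] v = b)
    (hkm : k ≤ m) : T.parent a = b := by
  have hba : T.parent^[m - k] a = b := by
    rw [← hk, ← Function.iterate_add_apply]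
    rw [show m - k + k = m from by omega, hm]
  set j := m - k with hj
  have hne : a ≠ b := hadj.ne
  have hjpos : j ≠ 0 := by
    intro h0; rw [h0] at hba; exact hne hba
  rcases T.uncle a b hadj with h | h | ⟨w, hel, t, ht⟩ | ⟨w, hel, t, ht⟩
  · exact h
  · -- parent b = a : cycle, contradiction
    exfalso
    have har : a ≠ r := by
      intro h'; subst h'
      exact hne ((Function.iterate_fixed T.parent_root j).symm.trans hba)
    have hcy : T.parent^[j + 1] a = a := by
      rw [Function.iterate_succ_apply', hba, h]
    have := depth_iter T (j + 1) a (by rw [hcy]; exact har)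
    rw [hcy] at this
    omega
  · -- w elder sibling of a, w ancestor of b
    exfalso
    obtain ⟨hwr, har, hwa, hpp, _⟩ := hel
    have hwanc : T.parent^[t + j] a = w := by
      rw [Function.iterate_add_apply, hba, ht]
    have hdw : T.depth w = T.depth a := by
      rw [T.depth_parent w hwr, T.depth_parent a har, hpp]
    have := depth_iter T (t + j) a (by rw [hwanc]; exact hwr)
    rw [hwanc] at this
    have : t + j = 0 := by omega
    have : w = a := by rw [← hwanc, this]; rfl
    exact hwa this
  · -- w elder sibling of b, w ancestor of a
    exfalso
    obtain ⟨hwr, hbr, hwb, hpp, _⟩ := hel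
    have hdw : T.depth w = T.depth b := by
      rw [T.depth_parent w hwr, T.depth_parent b hbr, hpp]
    have h1 := depth_iter T t a (by rw [ht]; exact hwr)
    have h2 := depth_iter T j a (by rw [hba]; exact hbr)
    rw [ht] at h1
    rw [hba] at h2
    have : t = j := by omega
    exact hwb (by rw [← ht, this, hba])

/-- If `T` is an uncle tree of a finite connected simple graph `G`
rooted at `r`, then for every vertex `v`, the path of `T` from `r` to `v`
(i.e. the set of ancestors of `v`) is an induced path of `G`: two vertices on
this path are adjacent in `G` iff they are consecutive on the path (one is the
parent of the other). -/
theorem uncleTree_rootPath_induced [Fintype V] (G : SimpleGraph V) (hG : G.Connected)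
    (r : V) (T : UncleTree G r) (v : V) :
    ∀ a b : V, Anc T.parent a v → Anc T.parent b v →
      (G.Adj a b ↔ a ≠ b ∧ (T.parent a = b ∨ T.parent b = a)) := by
  intro a b ha hb
  constructor
  · intro hadj
    refine ⟨hadj.ne, ?_⟩
    obtain ⟨k, hk⟩ := ha
    obtain ⟨m, hm⟩ := hb
    rcases le_total k m with hkm | hkm
    · exact Or.inl (key T hadj k m hk hm hkm)
    · exact Or.inr (key T hadj.symm m k hm hk hkm)
  · rintro ⟨hne, h | h⟩
    · have har : a ≠ r := by
        intro h'; subst h'; rw [T.parent_root] at h; exact hne h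
      exact h ▸ T.adj_parent a har
    · have hbr : b ≠ r := by
        intro h'; subst h'; rw [T.parent_root] at h; exact hne h.symm
      exact (h ▸ T.adj_parent b hbr).symm
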